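/- arXiv:2601.17776 — 2 statements merged into one kernel-verified Lean document; each statement's English description precedes it below -/
import Mathlib

section
/- Let r : ℝ → ℝ satisfy |r(s₁) - r(s₂)| ≤ β|s₁ - s₂| for all s₁, s₂ ∈ ℝ and some β > 0, with r(0) = 0. Define h(s) = r(s)·s. Then for all real numbers a and b, |h(a) - h(a - b) - h(b)| ≤ 2β|a - b|·|b|. -/
theorem stmt6 (r : ℝ → ℝ) (β : ℝ) (hβ : 0 < β) (hr0 : r 0 = 0)
    (hlip : ∀ s₁ s₂ : ℝ, |r s₁ - r s₂| ≤ β * |s₁ - s₂|) (a b : ℝ) :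
    |r a * a - r (a - b) * (a - b) - r b * b| ≤ 2 * β * |a - b| * |b| := by
  have key : r a * a - r (a - b) * (a - b) - r b * b
      = (r a - r (a - b)) * (a - b) + (r a - r b) * b := by ring
  rw [key]
  calc |(r a - r (a - b)) * (a - b) + (r a - r b) * b|
      ≤ |(r a - r (a - b)) * (a - b)| + |(r a - r b) * b| := abs_add_le _ _
    _ = |r a - r (a - b)| * |a - b| + |r a - r b| * |b| := by rw [abs_mul, abs_mul]
    _ ≤ (β * |b|) * |a - b| + (β * |a - b|) * |b| := by
        gcongr
        · simpa using hlip a (a - b)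
        · exact hlip a b
    _ = 2 * β * |a - b| * |b| := by ring
end

section
/- Let r : ℝ → ℝ be globally β-Lipschitz with r(0) = 0, and set h(s) = r(s)s. Let (u_n) be a bounded sequence in L²(ℝ^N) converging to u in L²_loc(ℝ^N) (and weakly in L²). Then ∫_{ℝ^N} h(u_n) dx - ∫_{ℝ^N} h(u_n - u) dx - ∫_{ℝ^N} h(u) dx → 0 as n → ∞. -/
open MeasureTheory Filter Topology Metric
open scoped ENNReal

lemma holder2 {α : Type*} [MeasurableSpace α] (μ : Measure α) {f g : α → ℝ}
    (hf : AEStronglyMeasurable f μ) (hg : AEStronglyMeasurable g μ) :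
    ∫⁻ x, (‖f x‖₊ : ℝ≥0∞) * (‖g x‖₊ : ℝ≥0∞) ∂μ ≤ eLpNorm f 2 μ * eLpNorm g 2 μ := by
  have hpq : Real.HolderConjugate 2 2 := Real.HolderConjugate.two_two
  have h := ENNReal.lintegral_mul_le_Lp_mul_Lq μ hpq hf.enorm hg.enorm
  simp only [Pi.mul_apply] at h
  rw [eLpNorm_eq_lintegral_rpow_enorm_toReal two_ne_zero ENNReal.ofNat_ne_top,
    eLpNorm_eq_lintegral_rpow_enorm_toReal two_ne_zero ENNReal.ofNat_ne_top]
  simpa [enorm_eq_nnnorm] using h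

lemma sqlint {α : Type*} [MeasurableSpace α] (μ : Measure α) (f : α → ℝ) :
    ∫⁻ x, (‖f x‖₊ : ℝ≥0∞) ^ (2:ℝ) ∂μ = (eLpNorm f 2 μ) ^ (2:ℝ) := by
  rw [eLpNorm_eq_lintegral_rpow_enorm_toReal two_ne_zero ENNReal.ofNat_ne_top, ← ENNReal.rpow_mul]
  norm_num [enorm_eq_nnnorm]

lemma tail_vanish {α : Type*} [MeasurableSpace α] [PseudoMetricSpace α]
    [OpensMeasurableSpace α] (μ : Measure α) (v : α → ℝ) (x₀ : α)
    (hfin : ∫⁻ x, (‖v x‖₊ : ℝ≥0∞) ^ (2:ℝ) ∂μ ≠ ∞) :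
    Tendsto (fun m : ℕ => ∫⁻ x in (closedBall x₀ m)ᶜ, (‖v x‖₊ : ℝ≥0∞) ^ (2:ℝ) ∂μ)
      atTop (nhds 0) := by
  set ν := μ.withDensity (fun x => (‖v x‖₊ : ℝ≥0∞) ^ (2:ℝ)) with hν
  have happ : ∀ m : ℕ, ν ((closedBall x₀ m)ᶜ) =
      ∫⁻ x in (closedBall x₀ m)ᶜ, (‖v x‖₊ : ℝ≥0∞) ^ (2:ℝ) ∂μ := fun m =>
    withDensity_apply _ (measurableSet_closedBall).compl
  have h0 : (⋂ m : ℕ, (closedBall x₀ m)ᶜ) = ∅ := by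
    ext x
    simp only [Set.mem_iInter, Set.mem_compl_iff, mem_closedBall, not_le, Set.mem_empty_iff_false,
      iff_false, not_forall, not_lt]
    obtain ⟨m, hm⟩ := exists_nat_ge (dist x x₀)
    exact ⟨m, hm⟩
  have := tendsto_measure_iInter_atTop (μ := ν)
    (fun m : ℕ => (measurableSet_closedBall (x := x₀) (ε := m)).compl.nullMeasurableSet)
    (fun i j hij => Set.compl_subset_compl.2 (closedBall_subset_closedBall (by exact_mod_cast hij)))
    ⟨0, by rw [happ 0]; exact ne_top_of_le_ne_top hfin (setLIntegral_le_lintegral _ _)⟩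
  rw [h0] at this
  simp only [measure_empty] at this
  exact this.congr (fun m => happ m)

lemma main_conv {α : Type*} [MeasurableSpace α] [PseudoMetricSpace α] [ProperSpace α]
    [OpensMeasurableSpace α] (μ : Measure α) (x₀ : α)
    (u : ℕ → α → ℝ) (v : α → ℝ) (hu2 : ∀ n, MemLp (u n) 2 μ) (hv2 : MemLp v 2 μ)
    (C : ℝ≥0∞) (hCtop : C ≠ ∞) (hCb : ∀ n, eLpNorm (fun x => u n x - v x) 2 μ ≤ C)
    (hloc : ∀ K : Set α, IsCompact K →
      Tendsto (fun n => eLpNorm (fun x => u n x - v x) 2 (μ.restrict K)) atTop (nhds 0)) :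
    Tendsto (fun n => ∫⁻ x, (‖u n x - v x‖₊ : ℝ≥0∞) * (‖v x‖₊ : ℝ≥0∞) ∂μ) atTop (nhds 0) := by
  rw [ENNReal.tendsto_nhds_zero]
  intro ε hε
  set ε₀ : ℝ≥0∞ := min ε 1 with hε₀
  have hε₀0 : ε₀ ≠ 0 := (lt_min hε zero_lt_one).ne'
  have hε₀top : ε₀ ≠ ∞ := ne_top_of_le_ne_top ENNReal.one_ne_top (min_le_right _ _)
  set S := eLpNorm v 2 μ with hSdef
  have hS : S ≠ ∞ := hv2.2.ne
  -- tail radius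
  set δ : ℝ≥0∞ := ε₀ / 2 / (C + 1) with hδdef
  have hhalf0 : ε₀ / 2 ≠ 0 := by
    simp [ENNReal.div_ne_zero, hε₀0]
  have hhalftop : ε₀ / 2 ≠ ∞ := by
    exact (ENNReal.div_lt_top hε₀top (by norm_num)).ne
  have hδ0 : δ ≠ 0 := by
    rw [hδdef, ENNReal.div_ne_zero]
    exact ⟨hhalf0, by simp [hCtop]⟩
  have hδtop : δ ≠ ∞ := (ENNReal.div_lt_top hhalftop (by simp)).ne
  have hδ2pos : 0 < δ ^ (2:ℝ) :=
    ENNReal.rpow_pos (pos_iff_ne_zero.2 hδ0) hδtop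
  have hfin : ∫⁻ x, (‖v x‖₊ : ℝ≥0∞) ^ (2:ℝ) ∂μ ≠ ∞ := by
    rw [sqlint]
    exact (ENNReal.rpow_lt_top_of_nonneg (by norm_num) hS).ne
  obtain ⟨m, hm⟩ :=
    ((ENNReal.tendsto_nhds_zero.mp (tail_vanish μ v x₀ hfin)) (δ ^ (2:ℝ)) hδ2pos).exists
  set K := closedBall x₀ (m:ℝ) with hK
  have hKmeas : MeasurableSet K := measurableSet_closedBall
  have hvK : eLpNorm v 2 (μ.restrict Kᶜ) ≤ δ := by
    rw [eLpNorm_eq_lintegral_rpow_enorm_toReal two_ne_zero ENNReal.ofNat_ne_top]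
    have h2 : ENNReal.toReal 2 = 2 := by norm_num
    rw [h2]
    calc (∫⁻ x, (‖v x‖₊ : ℝ≥0∞) ^ (2:ℝ) ∂(μ.restrict Kᶜ)) ^ (1/(2:ℝ))
        ≤ (δ ^ (2:ℝ)) ^ (1/(2:ℝ)) := ENNReal.rpow_le_rpow hm (by norm_num)
      _ = δ := by rw [← ENNReal.rpow_mul]; norm_num
  -- local smallness
  set δ₂ : ℝ≥0∞ := ε₀ / 2 / (S + 1) with hδ₂def
  have hδ₂0 : 0 < δ₂ := by
    rw [hδ₂def, pos_iff_ne_zero, ENNReal.div_ne_zero]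
    exact ⟨hhalf0, by simp [hS]⟩
  have hev := (ENNReal.tendsto_nhds_zero.mp (hloc K (isCompact_closedBall x₀ m))) δ₂ hδ₂0
  filter_upwards [hev] with n hn
  have hwm : AEStronglyMeasurable (fun x => u n x - v x) μ := ((hu2 n).sub hv2).1
  calc ∫⁻ x, (‖u n x - v x‖₊ : ℝ≥0∞) * (‖v x‖₊ : ℝ≥0∞) ∂μ
      = (∫⁻ x, (‖u n x - v x‖₊ : ℝ≥0∞) * (‖v x‖₊ : ℝ≥0∞) ∂(μ.restrict K))
        + ∫⁻ x, (‖u n x - v x‖₊ : ℝ≥0∞) * (‖v x‖₊ : ℝ≥0∞) ∂(μ.restrict Kᶜ) := by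
        rw [← lintegral_add_measure, Measure.restrict_add_restrict_compl hKmeas]
    _ ≤ eLpNorm (fun x => u n x - v x) 2 (μ.restrict K) * eLpNorm v 2 (μ.restrict K)
        + eLpNorm (fun x => u n x - v x) 2 (μ.restrict Kᶜ) * eLpNorm v 2 (μ.restrict Kᶜ) :=
        add_le_add (holder2 _ hwm.restrict hv2.1.restrict) (holder2 _ hwm.restrict hv2.1.restrict)
    _ ≤ δ₂ * S + C * δ := by
        refine add_le_add (mul_le_mul' hn (eLpNorm_mono_measure _ Measure.restrict_le_self))
          (mul_le_mul' (le_trans (eLpNorm_mono_measure _ Measure.restrict_le_self) (hCb n)) hvK)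
    _ ≤ ε₀ / 2 + ε₀ / 2 := by
        refine add_le_add ?_ ?_
        · calc δ₂ * S ≤ δ₂ * (S + 1) := mul_le_mul_right (le_add_right le_rfl) _
            _ = (S + 1) * (ε₀ / 2 / (S + 1)) := by rw [mul_comm, hδ₂def]
            _ ≤ ε₀ / 2 := ENNReal.mul_div_le
        · calc C * δ ≤ (C + 1) * (ε₀ / 2 / (C + 1)) :=
              mul_le_mul' (le_add_right le_rfl) le_rfl
            _ ≤ ε₀ / 2 := ENNReal.mul_div_le
    _ ≤ ε := by rw [ENNReal.add_halves]; exact min_le_left _ _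

lemma bs_bound {α : Type*} [MeasurableSpace α] {μ : Measure α}
    (u : ℕ → α → ℝ) (v : α → ℝ) (hu2 : ∀ n, MemLp (u n) 2 μ)
    (hweak : ∀ φ : α → ℝ, MemLp φ 2 μ →
      Tendsto (fun n => ∫ x, u n x * φ x ∂μ) atTop (nhds (∫ x, v x * φ x ∂μ))) :
    ∃ C : ℝ≥0∞, C ≠ ∞ ∧ ∀ n, eLpNorm (u n) 2 μ ≤ C := by
  set g : ℕ → (α →₂[μ] ℝ) →L[ℝ] ℝ := fun n => innerSL ℝ ((hu2 n).toLp (u n)) with hg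
  have hpt : ∀ φ : α →₂[μ] ℝ, ∃ C, ∀ n, ‖g n φ‖ ≤ C := by
    intro φ
    have hφ : MemLp (φ : α → ℝ) 2 μ := Lp.memLp φ
    have h1 : ∀ n, g n φ = ∫ x, u n x * (φ : α → ℝ) x ∂μ := by
      intro n
      have : g n φ = ∫ x, ((hu2 n).toLp (u n) : α → ℝ) x * (φ : α → ℝ) x ∂μ := by
        simp only [hg, innerSL_apply_apply, L2.inner_def, RCLike.inner_apply, conj_trivial]
        exact integral_congr_ae (ae_of_all _ fun x => mul_comm _ _)
      rw [this]
      refine integral_congr_ae ?_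
      filter_upwards [(hu2 n).coeFn_toLp] with x hx
      rw [hx]
    have h2 := (hweak (φ : α → ℝ) hφ).norm
    obtain ⟨C, hC⟩ := h2.bddAbove_range
    exact ⟨C, fun n => by rw [h1 n]; exact hC ⟨n, rfl⟩⟩
  obtain ⟨C', hC'⟩ := banach_steinhaus hpt
  refine ⟨ENNReal.ofReal C', ENNReal.ofReal_ne_top, fun n => ?_⟩
  have hn : ‖g n‖ = (eLpNorm (u n) 2 μ).toReal := by
    rw [hg]; simp only [innerSL_apply_norm]
    exact Lp.norm_toLp _ _
  rw [ENNReal.le_ofReal_iff_toReal_le (hu2 n).2.ne (le_trans (norm_nonneg (g n)) (hC' n))]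
  rw [← hn]; exact hC' n

theorem stmt7 (N : ℕ) (β : ℝ) (hβ : 0 < β) (r : ℝ → ℝ) (hr0 : r 0 = 0)
    (hlip : ∀ s₁ s₂ : ℝ, |r s₁ - r s₂| ≤ β * |s₁ - s₂|)
    (u : ℕ → EuclideanSpace ℝ (Fin N) → ℝ) (v : EuclideanSpace ℝ (Fin N) → ℝ)
    (hu2 : ∀ n, MemLp (u n) 2 volume) (hv2 : MemLp v 2 volume)
    (hbdd : ∃ C : ℝ≥0∞, ∀ n, eLpNorm (u n) 2 volume ≤ C)
    (hloc : ∀ K : Set (EuclideanSpace ℝ (Fin N)), IsCompact K →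
      Tendsto (fun n => eLpNorm (fun x => u n x - v x) 2 (volume.restrict K)) atTop (nhds 0))
    (hweak : ∀ φ : EuclideanSpace ℝ (Fin N) → ℝ, MemLp φ 2 volume →
      Tendsto (fun n => ∫ x, u n x * φ x) atTop (nhds (∫ x, v x * φ x))) :
    Tendsto (fun n => (∫ x, r (u n x) * u n x) - (∫ x, r (u n x - v x) * (u n x - v x))
      - (∫ x, r (v x) * v x)) atTop (nhds 0) := by
  -- basic facts about r
  have habs : ∀ s : ℝ, |r s| ≤ β * |s| := fun s => by simpa [hr0] using hlip s 0
  have hcont : Continuous r := by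
    refine LipschitzWith.continuous (K := ⟨β, hβ.le⟩) (LipschitzWith.of_dist_le_mul ?_)
    intro x y
    simp only [Real.dist_eq]; exact hlip x y
  have hpt : ∀ a b : ℝ, |r a * a - r (a - b) * (a - b) - r b * b| ≤ 2 * β * (|a - b| * |b|) := by
    intro a b
    have h1 : r a * a - r (a - b) * (a - b) - r b * b
        = (r a - r (a - b)) * (a - b) + (r a - r b) * b := by ring
    rw [h1]
    have h2 := hlip a (a - b)
    have h3 := hlip a b
    have h4 : |a - (a - b)| = |b| := by ring_nf
    rw [h4] at h2
    calc |(r a - r (a - b)) * (a - b) + (r a - r b) * b|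
        ≤ |(r a - r (a - b)) * (a - b)| + |(r a - r b) * b| := abs_add_le _ _
      _ = |r a - r (a - b)| * |a - b| + |r a - r b| * |b| := by rw [abs_mul, abs_mul]
      _ ≤ (β * |b|) * |a - b| + (β * |a - b|) * |b| :=
          add_le_add (mul_le_mul_of_nonneg_right h2 (abs_nonneg _))
            (mul_le_mul_of_nonneg_right h3 (abs_nonneg _))
      _ = 2 * β * (|a - b| * |b|) := by ring
  -- integrability of h ∘ f for f ∈ L²
  have hHint : ∀ f : EuclideanSpace ℝ (Fin N) → ℝ, MemLp f 2 volume →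
      Integrable (fun x => r (f x) * f x) volume := by
    intro f hf
    refine Integrable.mono' (hf.integrable_sq.const_mul β)
      ((hcont.comp_aestronglyMeasurable hf.1).mul hf.1) (ae_of_all _ fun x => ?_)
    rw [norm_mul, Real.norm_eq_abs, Real.norm_eq_abs]
    nlinarith [habs (f x), abs_nonneg (f x), sq_abs (f x), abs_nonneg (r (f x))]
  have hw2 : ∀ n, MemLp (fun x => u n x - v x) 2 volume := fun n => (hu2 n).sub hv2
  -- uniform bound via Banach–Steinhaus
  obtain ⟨C, hCtop, hCb⟩ := bs_bound u v hu2 hweak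
  have hwb : ∀ n, eLpNorm (fun x => u n x - v x) 2 volume ≤ C + eLpNorm v 2 volume :=
    fun n => le_trans (eLpNorm_sub_le (hu2 n).1 hv2.1 one_le_two)
      (add_le_add (hCb n) le_rfl)
  have hBtop : C + eLpNorm v 2 volume ≠ ∞ := by
    simp [hCtop, hv2.2.ne]
  -- the key lintegral convergence
  have hmain := main_conv volume (0 : EuclideanSpace ℝ (Fin N)) u v hu2 hv2
    (C + eLpNorm v 2 volume) hBtop hwb hloc
  set A : ℕ → ℝ := fun n =>
    (∫⁻ x, (‖u n x - v x‖₊ : ℝ≥0∞) * (‖v x‖₊ : ℝ≥0∞)).toReal with hAdef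
  have hA0 : Tendsto A atTop (nhds 0) := by
    have := (ENNReal.tendsto_toReal (by simp : (0:ℝ≥0∞) ≠ ∞)).comp hmain
    simpa [hAdef, Function.comp_def] using this
  have hprodm : ∀ n, AEStronglyMeasurable (fun x => |u n x - v x| * |v x|) volume := by
    intro n
    have : (fun x => |u n x - v x| * |v x|) = fun x => ‖u n x - v x‖ * ‖v x‖ := by
      simp [Real.norm_eq_abs]
    rw [this]
    exact ((hw2 n).1.norm.mul hv2.1.norm)
  have hprod : ∀ n, Integrable (fun x => |u n x - v x| * |v x|) volume := by
    intro n
    refine Integrable.mono' ((hw2 n).integrable_sq.add hv2.integrable_sq) (hprodm n)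
      (ae_of_all _ fun x => ?_)
    simp only [Pi.add_apply]
    rw [Real.norm_eq_abs, abs_mul, abs_abs, abs_abs]
    nlinarith [abs_nonneg (u n x - v x), abs_nonneg (v x), sq_abs (u n x - v x), sq_abs (v x)]
  have hAeq : ∀ n, ∫ x, |u n x - v x| * |v x| = A n := by
    intro n
    rw [hAdef, integral_eq_lintegral_of_nonneg_ae
      (ae_of_all _ fun x => mul_nonneg (abs_nonneg _) (abs_nonneg _)) (hprodm n)]
    congr 1
    refine lintegral_congr fun x => ?_
    rw [ENNReal.ofReal_mul (abs_nonneg _), ← Real.enorm_eq_ofReal_abs,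
      ← Real.enorm_eq_ofReal_abs, enorm_eq_nnnorm, enorm_eq_nnnorm]
  refine squeeze_zero_norm (fun n => ?_) (by simpa using hA0.const_mul (2 * β))
  have hi1 := hHint (u n) (hu2 n)
  have hi2 := hHint _ (hw2 n)
  have hi3 := hHint v hv2
  have hD : (∫ x, r (u n x) * u n x) - (∫ x, r (u n x - v x) * (u n x - v x))
      - (∫ x, r (v x) * v x)
      = ∫ x, (r (u n x) * u n x - r (u n x - v x) * (u n x - v x) - r (v x) * v x) := by
    have hi12 : Integrable
        (fun x => r (u n x) * u n x - r (u n x - v x) * (u n x - v x)) volume := hi1.sub hi2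
    rw [← integral_sub hi1 hi2, ← integral_sub hi12 hi3]
  rw [hD]
  calc ‖∫ x, (r (u n x) * u n x - r (u n x - v x) * (u n x - v x) - r (v x) * v x)‖
      ≤ ∫ x, ‖r (u n x) * u n x - r (u n x - v x) * (u n x - v x) - r (v x) * v x‖ :=
        norm_integral_le_integral_norm _
    _ ≤ ∫ x, 2 * β * (|u n x - v x| * |v x|) := by
        refine integral_mono ((hi1.sub hi2).sub hi3).norm ((hprod n).const_mul (2 * β))
          (fun x => ?_)
        rw [Real.norm_eq_abs]
        exact hpt (u n x) (v x)
    _ = 2 * β * ∫ x, |u n x - v x| * |v x| := integral_const_mul _ _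
    _ = 2 * β * A n := by rw [hAeq n]
end
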